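/- All coefficients of the Maclaurin series (in powers of r²) of the function f₁₈(r) = [(1 - r²/2 - r⁴/16 - r⁶/32)·K(r) - E(r)]/r⁸ are positive; explicitly, with aₙ = ((1/2)ₙ/n!)², the coefficient bₙ = ((2n+8)/(2n+7))·a_{n+4} - a_{n+3}/2 - a_{n+2}/16 - a_{n+1}/32 satisfies bₙ = (n+2)(n+1)(26n²+116n+123)/(16(n+3)(n+4)(2n+3)²)·a_{n+2} > 0 for all n ≥ 0. In particular f₁₈(0⁺) = 41π/4096. -/

import Mathlib

open Real Set Filter Topology

noncomputable def artanh (r : ℝ) : ℝ := (1/2) * Real.log ((1+r)/(1-r))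

noncomputable def ellipticK (r : ℝ) : ℝ :=
  ∫ t in (0:ℝ)..(π/2), (1 - r^2 * Real.sin t ^ 2) ^ (-(1/2) : ℝ)

noncomputable def ellipticE (r : ℝ) : ℝ :=
  ∫ t in (0:ℝ)..(π/2), (1 - r^2 * Real.sin t ^ 2) ^ ((1/2) : ℝ)
noncomputable def aseq (n : ℕ) : ℝ :=
  ((∏ i ∈ Finset.range n, ((1:ℝ)/2 + i)) / n.factorial)^2

noncomputable def bseq (n : ℕ) : ℝ :=
  ((2*(n:ℝ)+8)/(2*n+7)) * aseq (n+4) - aseq (n+3) / 2 - aseq (n+2) / 16 - aseq (n+1) / 32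

noncomputable def useq (n : ℕ) : ℝ := ∏ i ∈ Finset.range n, ((2*(i:ℝ)+1)/(2*i+2))

noncomputable def vseq (n : ℕ) : ℝ := useq n / (1 - 2*(n:ℝ))


lemma useq_succ (n : ℕ) : useq (n+1) = useq n * ((2*(n:ℝ)+1)/(2*n+2)) := by
  simp [useq, Finset.prod_range_succ, div_mul_div_comm]

lemma useq_pos (n : ℕ) : 0 < useq n := by
  apply Finset.prod_pos; intro i _; positivity

lemma useq_le_one (n : ℕ) : useq n ≤ 1 := by
  apply Finset.prod_le_one
  · intro i _; positivity
  · intro i _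
    rw [div_le_one (by positivity)]; linarith

lemma aseq_eq (n : ℕ) : aseq n = useq n ^ 2 := by
  have h : (∏ i ∈ Finset.range n, ((1:ℝ)/2 + i)) / n.factorial = useq n := by
    induction n with
    | zero => simp [useq]
    | succ k ih =>
      rw [Finset.prod_range_succ, useq_succ, ← ih, Nat.factorial_succ]
      push_cast
      field_simp
      ring
  rw [aseq, h]

lemma aseq_pos (n : ℕ) : 0 < aseq n := by
  rw [aseq_eq]; exact pow_pos (useq_pos n) 2

lemma aseq_succ (n : ℕ) : aseq (n+1) = aseq n * ((2*(n:ℝ)+1)/(2*n+2))^2 := by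
  rw [aseq_eq, aseq_eq, useq_succ, mul_pow]

lemma aseq_le_one (n : ℕ) : aseq n ≤ 1 := by
  rw [aseq_eq]
  calc useq n ^ 2 ≤ 1^2 := by
        apply pow_le_pow_left₀ (useq_pos n).le (useq_le_one n)
      _ = 1 := one_pow 2

lemma bseq_eq (n : ℕ) : bseq n =
      (((n:ℝ)+2)*((n:ℝ)+1)*(26*(n:ℝ)^2+116*n+123)) /
        (16*((n:ℝ)+3)*((n:ℝ)+4)*(2*(n:ℝ)+3)^2) * aseq (n+2) := by
  have h3 : aseq (n+3) = aseq (n+2) * ((2*(n:ℝ)+5)/(2*n+6))^2 := by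
    have := aseq_succ (n+2); push_cast at this ⊢; convert this using 3 <;> ring
  have h4 : aseq (n+4) = aseq (n+3) * ((2*(n:ℝ)+7)/(2*n+8))^2 := by
    have := aseq_succ (n+3); push_cast at this ⊢; convert this using 3 <;> ring
  have h2 : aseq (n+2) = aseq (n+1) * ((2*(n:ℝ)+3)/(2*n+4))^2 := by
    have := aseq_succ (n+1); push_cast at this ⊢; convert this using 3 <;> ring
  have h1 : aseq (n+1) = aseq (n+2) / ((2*(n:ℝ)+3)/(2*n+4))^2 := by
    rw [h2]; field_simp
  rw [bseq, h4, h3, h1]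
  have hn : (0:ℝ) ≤ n := Nat.cast_nonneg n
  field_simp
  ring


lemma binom_hasSum (μ : ℝ) (c : ℕ → ℝ) (hc0 : c 0 = 1)
    (hrec : ∀ n : ℕ, ((n:ℝ)+1) * c (n+1) = ((n:ℝ) - μ) * c n)
    (hb : ∀ n, |c n| ≤ 1) {x : ℝ} (hx0 : 0 ≤ x) (hx1 : x < 1) :
    HasSum (fun n => c n * x ^ n) ((1 - x) ^ μ) := by
  set R : ℝ := (1+x)/2 with hR
  have hRpos : 0 < R := by positivity
  have hR1 : R < 1 := by simp only [hR]; linarith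
  have hxR : x < R := by simp only [hR]; linarith
  -- summability of the series at any |y| < 1
  have hsum : ∀ y : ℝ, |y| < 1 → Summable (fun n => c n * y ^ n) := by
    intro y hy
    apply Summable.of_norm_bounded
      (summable_geometric_of_lt_one (abs_nonneg y) hy)
    intro n
    rw [norm_mul, norm_pow, Real.norm_eq_abs, Real.norm_eq_abs]
    calc |c n| * |y| ^ n ≤ 1 * |y| ^ n := by
          apply mul_le_mul_of_nonneg_right (hb n) (by positivity)
      _ = |y| ^ n := one_mul _
  set g : ℝ → ℝ := fun y => ∑' n, c n * y ^ n with hg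
  -- summable derivative bound
  have hu : Summable (fun n : ℕ => (n:ℝ) * R ^ (n-1)) := by
    rw [← summable_nat_add_iff 1]
    apply Summable.congr (f := fun n : ℕ => ((n:ℝ)+1) * R ^ n)
    · have h1 : Summable (fun n : ℕ => (n:ℝ) * R ^ n) := by
        have := summable_pow_mul_geometric_of_norm_lt_one (R := ℝ) 1
          (r := R) (by rwa [Real.norm_eq_abs, abs_of_pos hRpos])
        simpa using this
      have h2 : Summable (fun n : ℕ => R ^ n) :=
        summable_geometric_of_lt_one hRpos.le hR1
      simpa [add_mul] using h1.add h2
    · intro n; simp [add_comm 1 n]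
  set D : ℝ → ℝ := fun y => ∑' n, c n * ((n:ℝ) * y ^ (n-1)) with hD
  have hDsummable : ∀ y ∈ Ioo (-R) R, Summable (fun n => c n * ((n:ℝ) * y ^ (n-1))) := by
    intro y hy
    apply Summable.of_norm_bounded hu
    intro n
    rw [Real.norm_eq_abs, abs_mul, abs_mul, abs_pow]
    have h1 : |y| ≤ R := by
      rw [abs_le]; exact ⟨hy.1.le, hy.2.le⟩
    calc |c n| * (|(n:ℝ)| * |y| ^ (n-1)) ≤ 1 * (|(n:ℝ)| * R ^ (n-1)) := by
          apply mul_le_mul (hb n) _ (by positivity) zero_le_one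
          apply mul_le_mul_of_nonneg_left _ (abs_nonneg _)
          exact pow_le_pow_left₀ (abs_nonneg y) h1 _
      _ = (n:ℝ) * R ^ (n-1) := by rw [one_mul, abs_of_nonneg (Nat.cast_nonneg n)]
  have hderiv : ∀ y ∈ Ioo (-R) R, HasDerivAt g (D y) y := by
    intro y hy
    apply hasDerivAt_tsum_of_isPreconnected hu isOpen_Ioo (convex_Ioo _ _).isPreconnected
      (g := fun n z => c n * z ^ n) (g' := fun n z => c n * ((n:ℝ) * z ^ (n-1)))
    · intro n z _
      exact (hasDerivAt_pow n z).const_mul (c n)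
    · intro n z hz
      rw [Real.norm_eq_abs, abs_mul, abs_mul, abs_pow]
      have h1 : |z| ≤ R := by rw [abs_le]; exact ⟨hz.1.le, hz.2.le⟩
      calc |c n| * (|(n:ℝ)| * |z| ^ (n-1)) ≤ 1 * (|(n:ℝ)| * R ^ (n-1)) := by
            apply mul_le_mul (hb n) _ (by positivity) zero_le_one
            apply mul_le_mul_of_nonneg_left _ (abs_nonneg _)
            exact pow_le_pow_left₀ (abs_nonneg z) h1 _
        _ = (n:ℝ) * R ^ (n-1) := by rw [one_mul, abs_of_nonneg (Nat.cast_nonneg n)]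
    · exact ⟨by linarith, hRpos⟩
    · exact hsum 0 (by simp)
    · exact hy
  -- the ODE relation : (1 - y) * D y = -μ * g y
  have hrel : ∀ y ∈ Ioo (-R) R, (1 - y) * D y = -μ * g y := by
    intro y hy
    have hyabs : |y| < 1 := by
      rw [abs_lt]; constructor <;> [linarith [hy.1]; linarith [hy.2]]
    have h1 : HasSum (fun n => c n * ((n:ℝ) * y ^ (n-1))) (D y) :=
      (hDsummable y hy).hasSum
    have h1' : HasSum (fun n => c (n+1) * (((n:ℝ)+1) * y ^ n)) (D y) := by
      have := (hasSum_nat_add_iff' (f := fun n => c n * ((n:ℝ) * y ^ (n-1))) 1).2 h1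
      simpa using this
    have h2 : HasSum (fun n : ℕ => ((n:ℝ) - μ) * c n * y ^ n) (D y) := by
      have hfun : (fun n : ℕ => c (n+1) * (((n:ℝ)+1) * y ^ n))
          = fun n : ℕ => ((n:ℝ) - μ) * c n * y ^ n := by
        funext n
        calc c (n+1) * (((n:ℝ)+1) * y ^ n) = (((n:ℝ)+1) * c (n+1)) * y ^ n := by ring
          _ = (((n:ℝ) - μ) * c n) * y ^ n := by rw [hrec n]
      rw [← hfun]; exact h1'
    have h3 : HasSum (fun n : ℕ => c n * y ^ n) (g y) := (hsum y hyabs).hasSum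
    have h4 : HasSum (fun n : ℕ => (n:ℝ) * c n * y ^ n) (D y + μ * g y) := by
      have h := h2.add (h3.mul_left μ)
      have hfun : (fun n : ℕ => ((n:ℝ) - μ) * c n * y ^ n + μ * (c n * y ^ n))
          = fun n : ℕ => (n:ℝ) * c n * y ^ n := by funext n; ring
      rwa [hfun] at h
    have h5 : HasSum (fun n : ℕ => (n:ℝ) * c n * y ^ n) (y * D y) := by
      have h := h1.mul_left y
      have hfun : (fun n : ℕ => y * (c n * ((n:ℝ) * y ^ (n-1))))
          = fun n : ℕ => (n:ℝ) * c n * y ^ n := by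
        funext n
        cases n with
        | zero => simp
        | succ m =>
          simp only [Nat.add_sub_cancel, Nat.cast_add, Nat.cast_one]
          rw [pow_succ]
          ring
      rwa [hfun] at h
    have := h5.unique h4
    linarith [this]
  -- h is constant
  have hIcc : Icc (0:ℝ) x ⊆ Ioo (-R) R := by
    intro z hz
    exact ⟨by linarith [hz.1], by linarith [hz.2]⟩
  have hh : ∀ y ∈ Ioo (-R) R, HasDerivAt (fun z => g z * (1-z) ^ (-μ)) 0 y := by
    intro y hy
    have h1y : 0 < 1 - y := by linarith [hy.2]
    have hrpow : HasDerivAt (fun z : ℝ => (1-z) ^ (-μ)) (μ * (1-y) ^ (-μ-1)) y := by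
      have hbase : HasDerivAt (fun z : ℝ => 1 - z) (-1) y := by
        simpa using (hasDerivAt_id y).const_sub 1
      have hr := Real.hasDerivAt_rpow_const (x := 1-y) (p := -μ) (Or.inl h1y.ne')
      have := hr.comp y hbase
      refine this.congr_deriv ?_
      ring
    have hmul := (hderiv y hy).mul hrpow
    refine hmul.congr_deriv (Eq.symm ?_)
    have hkey := hrel y hy
    have e1 : (1-y) ^ (-μ) = (1-y) ^ (-μ-1) * (1-y) := by
      have he : -μ = -μ-1+1 := by ring
      rw [he, Real.rpow_add h1y, Real.rpow_one]
      ring_nf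
    rw [e1]
    linear_combination (-(1-y) ^ (-μ-1)) * hkey
  have hcont : ContinuousOn (fun z => g z * (1-z) ^ (-μ)) (Icc 0 x) := by
    intro z hz
    exact ((hh z (hIcc hz)).continuousAt).continuousWithinAt
  have hconst := constant_of_has_deriv_right_zero hcont
    (fun z hz => ((hh z (hIcc (Ico_subset_Icc_self hz))).hasDerivWithinAt)) x
    (right_mem_Icc.2 hx0)
  -- evaluate at 0
  have hg0 : g 0 = 1 := by
    have h : (∑' n : ℕ, c n * (0:ℝ) ^ n) = 1 := by
      rw [tsum_eq_single 0]
      · simp [hc0]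
      · intro n hn
        simp [zero_pow hn]
    exact h
  have hx1' : (0:ℝ) < 1 - x := by linarith
  have hne : (1-x) ^ μ ≠ 0 := (Real.rpow_pos_of_pos hx1' _).ne'
  have hgx : g x = (1 - x) ^ μ := by
    rw [hg0, one_mul] at hconst
    norm_num [Real.one_rpow] at hconst
    rw [Real.rpow_neg hx1'.le] at hconst
    exact (mul_inv_eq_one₀ hne).mp hconst
  rw [← hgx]
  exact (hsum x (by rwa [abs_of_nonneg hx0])).hasSum


lemma wallis (n : ℕ) : (∫ t in (0:ℝ)..(π/2), Real.sin t ^ (2*n)) = (π/2) * useq n := by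
  induction n with
  | zero => simp [useq]
  | succ k ih =>
    have h : 2*(k+1) = 2*k + 2 := by ring
    rw [h, integral_sin_pow, ih, useq_succ]
    simp [Real.cos_pi_div_two, Real.sin_pi_div_two]
    try (push_cast; ring)

lemma hasSum_elliptic (μ : ℝ) (c : ℕ → ℝ) (hc0 : c 0 = 1)
    (hrec : ∀ n : ℕ, ((n:ℝ)+1) * c (n+1) = ((n:ℝ) - μ) * c n)
    (hb : ∀ n, |c n| ≤ 1) {r : ℝ} (hr0 : 0 ≤ r) (hr1 : r < 1) :
    HasSum (fun n => c n * r^(2*n) * ((π/2) * useq n))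
      (∫ t in (0:ℝ)..(π/2), (1 - r^2 * Real.sin t ^ 2) ^ μ) := by
  have hr2 : r^2 < 1 := by nlinarith
  have key : HasSum (fun n => ∫ t in (0:ℝ)..(π/2), c n * (r^2 * Real.sin t ^ 2)^n)
      (∫ t in (0:ℝ)..(π/2), (1 - r^2 * Real.sin t ^ 2) ^ μ) := by
    apply intervalIntegral.hasSum_integral_of_dominated_convergence
      (bound := fun n _ => (r^2)^n)
    · intro n
      apply Continuous.aestronglyMeasurable
      fun_prop
    · intro n
      filter_upwards with t _
      rw [Real.norm_eq_abs, abs_mul, abs_pow]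
      have h1 : |r^2 * Real.sin t ^ 2| ≤ r^2 := by
        rw [abs_of_nonneg (by positivity)]
        nlinarith [Real.sin_sq_le_one t, sq_nonneg r]
      calc |c n| * |r^2 * Real.sin t ^ 2| ^ n ≤ 1 * (r^2)^n := by
            apply mul_le_mul (hb n) (pow_le_pow_left₀ (abs_nonneg _) h1 n) (by positivity)
              zero_le_one
        _ = (r^2)^n := one_mul _
    · filter_upwards with t _
      exact summable_geometric_of_lt_one (by positivity) hr2
    · exact intervalIntegrable_const
    · filter_upwards with t _
      apply binom_hasSum μ c hc0 hrec hb (by positivity)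
      nlinarith [Real.sin_sq_le_one t, sq_nonneg r]
  have hfun : (fun n => ∫ t in (0:ℝ)..(π/2), c n * (r^2 * Real.sin t ^ 2)^n)
      = fun n => c n * r^(2*n) * ((π/2) * useq n) := by
    funext n
    have : ∀ t : ℝ, c n * (r^2 * Real.sin t ^ 2)^n = (c n * r^(2*n)) * Real.sin t ^ (2*n) := by
      intro t
      rw [mul_pow, ← pow_mul, ← pow_mul]
      ring
    simp_rw [this]
    rw [intervalIntegral.integral_const_mul, wallis]
    try ring
  rwa [hfun] at key


lemma useq_rec (n : ℕ) : ((n:ℝ)+1) * useq (n+1) = ((n:ℝ) - (-(1/2))) * useq n := by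
  rw [useq_succ]
  have h : (2*(n:ℝ)+2) ≠ 0 := by positivity
  field_simp
  ring

lemma one_sub_two_n_ne (n : ℕ) : (1 - 2*(n:ℝ)) ≠ 0 := by
  rcases Nat.eq_zero_or_pos n with h0 | h0
  · rw [h0]; norm_num
  · have h : (1:ℝ) ≤ (n:ℝ) := by exact_mod_cast h0
    intro hc; linarith

lemma vseq_rec (n : ℕ) : ((n:ℝ)+1) * vseq (n+1) = ((n:ℝ) - (1/2)) * vseq n := by
  have h3 := one_sub_two_n_ne n
  have h5 : (1 - 2*(((n+1:ℕ)):ℝ)) ≠ 0 := by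
    push_cast
    have := Nat.cast_nonneg (α := ℝ) n
    intro hc; linarith
  unfold vseq
  rw [mul_div_assoc', useq_rec n]
  rw [div_eq_iff h5]
  push_cast
  field_simp
  rw [eq_div_iff (by intro hc; apply h3; linarith)]
  ring

lemma vseq_abs_le (n : ℕ) : |vseq n| ≤ 1 := by
  unfold vseq
  rw [abs_div]
  have h1 : (1:ℝ) ≤ |1 - 2*(n:ℝ)| := by
    rcases Nat.eq_zero_or_pos n with h0 | h0
    · rw [h0]; norm_num
    · have : (1:ℝ) ≤ (n:ℝ) := by exact_mod_cast h0
      rw [abs_of_nonpos (by linarith)]; linarith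
  rw [div_le_one (lt_of_lt_of_le one_pos h1)]
  calc |useq n| ≤ 1 := by rw [abs_of_pos (useq_pos n)]; exact useq_le_one n
    _ ≤ |1 - 2*(n:ℝ)| := h1

lemma hasSum_K {r : ℝ} (hr0 : 0 ≤ r) (hr1 : r < 1) :
    HasSum (fun n => (π/2) * aseq n * r^(2*n)) (ellipticK r) := by
  have h := hasSum_elliptic (-(1/2)) useq (by simp [useq]) useq_rec
    (fun n => by rw [abs_of_pos (useq_pos n)]; exact useq_le_one n) hr0 hr1
  have hfun : (fun n => useq n * r^(2*n) * ((π/2) * useq n))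
      = fun n => (π/2) * aseq n * r^(2*n) := by
    funext n; rw [aseq_eq]; ring
  rwa [hfun] at h

lemma hasSum_E {r : ℝ} (hr0 : 0 ≤ r) (hr1 : r < 1) :
    HasSum (fun n => (π/2) * (aseq n / (1 - 2*(n:ℝ))) * r^(2*n)) (ellipticE r) := by
  have h := hasSum_elliptic (1/2) vseq (by simp [vseq, useq]) vseq_rec vseq_abs_le hr0 hr1
  have hfun : (fun n => vseq n * r^(2*n) * ((π/2) * useq n))
      = fun n => (π/2) * (aseq n / (1 - 2*(n:ℝ))) * r^(2*n) := by
    funext n; rw [aseq_eq]; unfold vseq; ring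
  rwa [hfun] at h


lemma aseq_val : aseq 0 = 1 ∧ aseq 1 = 1/4 ∧ aseq 2 = 9/64 ∧ aseq 3 = 25/256 := by
  refine ⟨?_, ?_, ?_, ?_⟩ <;>
    (simp [aseq, Finset.prod_range_succ, Nat.factorial]; try norm_num)

lemma main_hasSum {r : ℝ} (hr : r ∈ Ioo (0:ℝ) 1) :
    HasSum (fun n => (π/2) * bseq n * r^(2*n+8))
      ((1 - r^2/2 - r^4/16 - r^6/32) * ellipticK r - ellipticE r) := by
  obtain ⟨hr0, hr1⟩ := hr
  set s := r^2 with hs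
  -- series in s
  have hK : HasSum (fun n : ℕ => (π/2) * aseq n * s^n) (ellipticK r) := by
    have h := hasSum_K hr0.le hr1
    have hfun : (fun n : ℕ => (π/2) * aseq n * r^(2*n)) = fun n => (π/2) * aseq n * s^n := by
      funext n; rw [hs, ← pow_mul]
    rwa [hfun] at h
  have hE : HasSum (fun n : ℕ => (π/2) * (aseq n / (1 - 2*(n:ℝ))) * s^n) (ellipticE r) := by
    have h := hasSum_E hr0.le hr1
    have hfun : (fun n : ℕ => (π/2) * (aseq n / (1 - 2*(n:ℝ))) * r^(2*n))
        = fun n => (π/2) * (aseq n / (1 - 2*(n:ℝ))) * s^n := by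
      funext n; rw [hs, ← pow_mul]
    rwa [hfun] at h
  -- shifted series
  have hK4 := (hasSum_nat_add_iff' (f := fun n : ℕ => (π/2) * aseq n * s^n) 4).2 hK
  have hK3 := (hasSum_nat_add_iff' (f := fun n : ℕ => (π/2) * aseq n * s^n) 3).2 hK
  have hK2 := (hasSum_nat_add_iff' (f := fun n : ℕ => (π/2) * aseq n * s^n) 2).2 hK
  have hK1 := (hasSum_nat_add_iff' (f := fun n : ℕ => (π/2) * aseq n * s^n) 1).2 hK
  have hE4 := (hasSum_nat_add_iff'
    (f := fun n : ℕ => (π/2) * (aseq n / (1 - 2*(n:ℝ))) * s^n) 4).2 hE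
  have total := (((hK4.sub (hK3.mul_left (s/2))).sub
      (hK2.mul_left (s^2/16))).sub (hK1.mul_left (s^3/32))).sub hE4
  -- identify the term
  have hterm : (fun n : ℕ =>
        ((((π/2) * aseq (n+4) * s^(n+4) - s/2 * ((π/2) * aseq (n+3) * s^(n+3))) -
          s^2/16 * ((π/2) * aseq (n+2) * s^(n+2))) - s^3/32 * ((π/2) * aseq (n+1) * s^(n+1))) -
          (π/2) * (aseq (n+4) / (1 - 2*((n+4:ℕ):ℝ))) * s^(n+4))
      = fun n : ℕ => (π/2) * bseq n * s^(n+4) := by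
    funext n
    have hne : (1 - 2*((n+4:ℕ):ℝ)) ≠ 0 := one_sub_two_n_ne (n+4)
    have hne2 : (2*(n:ℝ)+7) ≠ 0 := by positivity
    have e3 : s^(n+4) = s^(n+3) * s := pow_succ s (n+3)
    have e2 : s^(n+3) = s^(n+2) * s := pow_succ s (n+2)
    have e1 : s^(n+2) = s^(n+1) * s := pow_succ s (n+1)
    rw [bseq]
    push_cast at hne ⊢
    rw [e3, e2, e1]
    field_simp
    ring
  rw [hterm] at total
  -- identify the sum
  have hsumval :
      ((((ellipticK r - ∑ i ∈ Finset.range 4, (π/2) * aseq i * s^i) -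
        s/2 * (ellipticK r - ∑ i ∈ Finset.range 3, (π/2) * aseq i * s^i)) -
        s^2/16 * (ellipticK r - ∑ i ∈ Finset.range 2, (π/2) * aseq i * s^i)) -
        s^3/32 * (ellipticK r - ∑ i ∈ Finset.range 1, (π/2) * aseq i * s^i)) -
        (ellipticE r - ∑ i ∈ Finset.range 4, (π/2) * (aseq i / (1 - 2*(i:ℝ))) * s^i)
      = (1 - r^2/2 - r^4/16 - r^6/32) * ellipticK r - ellipticE r := by
    obtain ⟨v0, v1, v2, v3⟩ := aseq_val
    simp only [Finset.sum_range_succ, Finset.sum_range_zero, v0, v1, v2, v3]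
    norm_num
    rw [hs]
    ring
  rw [hsumval] at total
  -- back to r
  have hfun : (fun n : ℕ => (π/2) * bseq n * s^(n+4))
      = fun n : ℕ => (π/2) * bseq n * r^(2*n+8) := by
    funext n
    rw [hs, ← pow_mul]
    ring_nf
  rwa [hfun] at total


lemma bseq_pos (n : ℕ) : 0 < bseq n := by
  rw [bseq_eq]
  have hn : (0:ℝ) ≤ n := Nat.cast_nonneg n
  have := aseq_pos (n+2)
  apply mul_pos
  · apply div_pos <;> nlinarith
  · exact this

lemma bseq_le_one (n : ℕ) : bseq n ≤ 1 := by
  rw [bseq_eq]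
  have hn : (0:ℝ) ≤ n := Nat.cast_nonneg n
  have h1 := aseq_pos (n+2)
  have h2 := aseq_le_one (n+2)
  have hq : (((n:ℝ)+2)*((n:ℝ)+1)*(26*(n:ℝ)^2+116*n+123)) /
        (16*((n:ℝ)+3)*((n:ℝ)+4)*(2*(n:ℝ)+3)^2) ≤ 1 := by
    rw [div_le_one (by nlinarith)]
    nlinarith
  calc _ ≤ (((n:ℝ)+2)*((n:ℝ)+1)*(26*(n:ℝ)^2+116*n+123)) /
        (16*((n:ℝ)+3)*((n:ℝ)+4)*(2*(n:ℝ)+3)^2) * 1 := by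
        apply mul_le_mul_of_nonneg_left h2
        positivity
    _ ≤ 1 := by rw [mul_one]; exact hq

lemma bseq_zero : bseq 0 = 41/2048 := by
  rw [bseq_eq]
  have : aseq 2 = 9/64 := by
    simp [aseq, Finset.prod_range_succ, Nat.factorial]
    norm_num
  rw [this]
  norm_num

lemma key_hasSum {r : ℝ} (hr : r ∈ Ioo (0:ℝ) 1) :
    HasSum (fun n : ℕ => bseq n * r^(2*n))
      ((((1 - r^2/2 - r^4/16 - r^6/32) * ellipticK r - ellipticE r) / r^8) / (π/2)) := by
  have h := main_hasSum hr
  have hne : ((π/2) * r^8) ≠ 0 := by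
    have := pi_pos
    have := hr.1
    positivity
  have hfun : (fun n : ℕ => (π/2) * bseq n * r^(2*n+8))
      = fun n : ℕ => ((π/2) * r^8) * (bseq n * r^(2*n)) := by
    funext n
    rw [pow_add]
    ring
  rw [hfun] at h
  apply (hasSum_mul_left_iff hne).mp
  refine (congrArg (HasSum _) ?_).mpr h
  rw [div_div, show r^8*(π/2) = π/2*r^8 from by ring, ← mul_div_assoc,
    mul_div_cancel_left₀ _ hne]


lemma part2 {r : ℝ} (hr : r ∈ Ioo (0:ℝ) 1) :
    ((1 - r^2/2 - r^4/16 - r^6/32) * ellipticK r - ellipticE r) / r^8 =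
      (π/2) * ∑' n : ℕ, bseq n * r^(2*n) := by
  rw [(key_hasSum hr).tsum_eq]
  have hπ : (π/2) ≠ 0 := by positivity
  rw [mul_div_cancel₀ _ hπ]

lemma tsum_bounds {r : ℝ} (hr : r ∈ Ioo (0:ℝ) (1/2)) :
    41/2048 ≤ (∑' n : ℕ, bseq n * r^(2*n)) ∧
    (∑' n : ℕ, bseq n * r^(2*n)) ≤ 41/2048 + 2*r^2 := by
  have hr' : r ∈ Ioo (0:ℝ) 1 := ⟨hr.1, by linarith [hr.2]⟩
  have hsum : Summable (fun n : ℕ => bseq n * r^(2*n)) := (key_hasSum hr').summable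
  have hr2 : r^2 < 1 := by nlinarith [hr'.1, hr'.2]
  have hgeo : Summable (fun n : ℕ => (r^2)^(n+1)) := by
    apply Summable.comp_injective (summable_geometric_of_lt_one (by positivity) hr2)
    exact add_left_injective 1
  have hsplit : (∑' n : ℕ, bseq n * r^(2*n))
      = bseq 0 + ∑' n : ℕ, bseq (n+1) * r^(2*(n+1)) := by
    rw [Summable.tsum_eq_zero_add hsum]
    simp
  have htail_nonneg : 0 ≤ ∑' n : ℕ, bseq (n+1) * r^(2*(n+1)) := by
    apply tsum_nonneg
    intro n
    rw [pow_mul]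
    exact mul_nonneg (bseq_pos (n+1)).le (by positivity)
  have htail_le : (∑' n : ℕ, bseq (n+1) * r^(2*(n+1))) ≤ 2*r^2 := by
    have h1 : (∑' n : ℕ, bseq (n+1) * r^(2*(n+1))) ≤ ∑' n : ℕ, (r^2)^(n+1) := by
      apply Summable.tsum_le_tsum _ ((summable_nat_add_iff (f := fun n : ℕ => bseq n * r^(2*n)) 1).2 hsum) hgeo
      intro n
      rw [pow_mul]
      calc bseq (n+1) * (r^2)^(n+1) ≤ 1 * (r^2)^(n+1) := by
            apply mul_le_mul_of_nonneg_right (bseq_le_one _) (by positivity)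
        _ = (r^2)^(n+1) := one_mul _
    have h2 : (∑' n : ℕ, (r^2)^(n+1)) = r^2 * (1 - r^2)⁻¹ := by
      have hfun : (fun n : ℕ => (r^2)^(n+1)) = fun n : ℕ => r^2 * (r^2)^n := by
        funext n; rw [pow_succ]; ring
      rw [hfun, tsum_mul_left, tsum_geometric_of_lt_one (by positivity) hr2]
    have h3 : (1 - r^2)⁻¹ ≤ 2 := by
      rw [inv_le_comm₀ (by nlinarith [hr.1, hr.2]) (by norm_num)]
      nlinarith [hr.1, hr.2]
    calc (∑' n : ℕ, bseq (n+1) * r^(2*(n+1))) ≤ r^2 * (1 - r^2)⁻¹ := by rw [← h2]; exact h1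
      _ ≤ r^2 * 2 := by apply mul_le_mul_of_nonneg_left h3 (by positivity)
      _ = 2*r^2 := by ring
  constructor
  · rw [hsplit, bseq_zero]; linarith
  · rw [hsplit, bseq_zero]; linarith

lemma part3 : Tendsto (fun r : ℝ =>
        ((1 - r^2/2 - r^4/16 - r^6/32) * ellipticK r - ellipticE r) / r^8)
      (𝓝[>] 0) (𝓝 (41*π/4096)) := by
  have hmem : Ioo (0:ℝ) (1/2) ∈ 𝓝[>] (0:ℝ) :=
    Ioo_mem_nhdsGT_of_mem (by norm_num : (0:ℝ) ∈ Ico (0:ℝ) (1/2))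
  have hval : (41:ℝ)*π/4096 = (π/2) * (41/2048) := by ring
  rw [hval]
  refine tendsto_of_tendsto_of_tendsto_of_le_of_le'
    (g := fun _ : ℝ => (π/2) * (41/2048)) (h := fun r : ℝ => (π/2) * (41/2048 + 2*r^2))
    tendsto_const_nhds ?_ ?_ ?_
  · have hcont : Continuous (fun r : ℝ => (π/2) * (41/2048 + 2*r^2)) := by continuity
    have := hcont.tendsto 0
    norm_num at this
    apply Tendsto.mono_left _ nhdsWithin_le_nhds
    convert this using 2
    try norm_num
  · filter_upwards [hmem] with r hr
    have hr' : r ∈ Ioo (0:ℝ) 1 := ⟨hr.1, by linarith [hr.2]⟩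
    rw [part2 hr']
    have := (tsum_bounds hr).1
    have hπ : (0:ℝ) < π/2 := by positivity
    nlinarith
  · filter_upwards [hmem] with r hr
    have hr' : r ∈ Ioo (0:ℝ) 1 := ⟨hr.1, by linarith [hr.2]⟩
    rw [part2 hr']
    have := (tsum_bounds hr).2
    have hπ : (0:ℝ) < π/2 := by positivity
    nlinarith

theorem stmt11 :
    (∀ n : ℕ, bseq n =
      (((n:ℝ)+2)*((n:ℝ)+1)*(26*(n:ℝ)^2+116*n+123)) /
        (16*((n:ℝ)+3)*((n:ℝ)+4)*(2*(n:ℝ)+3)^2) * aseq (n+2) ∧ 0 < bseq n) ∧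
    (∀ r ∈ Ioo (0:ℝ) 1,
      ((1 - r^2/2 - r^4/16 - r^6/32) * ellipticK r - ellipticE r) / r^8 =
        (π/2) * ∑' n : ℕ, bseq n * r^(2*n)) ∧
    Tendsto (fun r : ℝ =>
        ((1 - r^2/2 - r^4/16 - r^6/32) * ellipticK r - ellipticE r) / r^8)
      (𝓝[>] 0) (𝓝 (41*π/4096)) := by
  exact ⟨fun n => ⟨bseq_eq n, bseq_pos n⟩, fun r hr => part2 hr, part3⟩
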